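/- Move commutes with moves relabeled through it: for pairwise distinct indices i, j, k, applying Move[i, j] then Move[i, k] to a document equals applying Move[j, k] then Move[i, j]. -/

import Mathlib

/-- Atomic types of document components. -/
inductive Ty where
  | num | str | bool | del
deriving DecidableEq, Repr

/-- A document is a tuple (list) of atomic types. -/
abbrev Doc := List Ty

/-- Edit operations (1-based indices). `ins i t p` inserts type `t` at index `i`
    (with unique identifier `p`), shifting indices ≥ i right; `conv i t` sets the
    type at index `i` to `t`; `move i j` sets index `i` to the type at index `j`
    and sets index `j` to the tombstone `del`. -/
inductive Edit where
  | id
  | ins (i : ℕ) (t : Ty) (p : ℕ)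
  | conv (i : ℕ) (t : Ty)
  | move (i j : ℕ)
deriving DecidableEq, Repr

/-- Partial action of an edit on a document (1-based indices). -/
def Edit.apply : Edit → Doc → Option Doc
  | .id, d => some d
  | .ins i t _, d =>
      if 1 ≤ i ∧ i ≤ d.length + 1 then
        some (d.take (i-1) ++ t :: d.drop (i-1))
      else none
  | .conv i t, d =>
      if 1 ≤ i ∧ i ≤ d.length then some (d.set (i-1) t) else none
  | .move i j, d =>
      if 1 ≤ i ∧ i ≤ d.length ∧ 1 ≤ j ∧ j ≤ d.length ∧ i ≠ j then
        some ((d.set (i-1) (d.getD (j-1) .del)).set (j-1) .del)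
      else none

lemma key_move_aux (d : List Ty) (a b c : ℕ) (ha : a < d.length) (hb : b < d.length)
    (hc : c < d.length) (hab : a ≠ b) (hac : a ≠ c) (hbc : b ≠ c)
    (d1 d2 : List Ty)
    (hd1 : d1 = (d.set a (d.getD b Ty.del)).set b .del)
    (hd2 : d2 = (d.set b (d.getD c Ty.del)).set c .del) :
    (d1.set a (d1.getD c .del)).set c .del =
    (d2.set a (d2.getD b .del)).set b .del := by
  subst hd1 hd2
  apply List.ext_getElem?
  intro n
  simp only [List.getD_eq_getElem?_getD, List.getElem?_set, List.length_set]
  split_ifs <;> simp_all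

/-- for pairwise distinct `i, j, k`, applying `Move[i,j]` then
`Move[i,k]` equals applying `Move[j,k]` then `Move[i,j]`. -/
theorem move_move_relabel (i j k : ℕ) (hij : i ≠ j) (hik : i ≠ k) (hjk : j ≠ k)
    (d r₁ r₂ : Doc)
    (h₁ : ((Edit.move i j).apply d >>= (Edit.move i k).apply) = some r₁)
    (h₂ : ((Edit.move j k).apply d >>= (Edit.move i j).apply) = some r₂) :
    r₁ = r₂ := by
  simp only [Edit.apply, Option.bind_eq_bind] at h₁ h₂
  split at h₁
  · next hc =>
    simp only [Option.bind_some, Edit.apply] at h₁ h₂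
    split at h₁
    · next hc2 =>
      split at h₂
      · next hc3 =>
        simp only [Option.bind_some, Edit.apply] at h₂
        split at h₂
        · injection h₁ with h₁; injection h₂ with h₂
          subst h₁ h₂
          obtain ⟨hi1, hi2, hj1, hj2, -⟩ := hc
          simp only [List.length_set] at hc2
          obtain ⟨-, -, hk1, hk2, -⟩ := hc2
          exact key_move_aux d (i-1) (j-1) (k-1) (by omega) (by omega) (by omega)
            (by omega) (by omega) (by omega) _ _ rfl rfl
        · exact absurd h₂ (by simp)
      · simp at h₂
    · exact absurd h₁ (by simp)
  · exact absurd h₁ (by simp)
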